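/- Define f mapping functions C : ℕ → ℕ to functions ℕ → ℕ by f(C)(0) = C(0) mod 2 and f(C)(i+1) = C(i+1) mod 2 + ⌊C(i)/2⌋. Then for every C : ℕ → ℕ, every k ≥ 1, and every j < k, the k-fold iterate satisfies f^[k](C)(j) ≤ 1. Moreover, if C(j) ≤ 1 for all j, then f(C) = C. -/
import Mathlib

/-- One round of the consolidation step of a Fibonacci heap's delete-min: `C i` is the
number of trees of rank `i` on the root list; in each round the trees of each rank are
paired up and each pair merges into a tree of the next rank, leaving at most one
leftover tree. -/
def consolidate (C : ℕ → ℕ) : ℕ → ℕ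
  | 0 => C 0 % 2
  | (i + 1) => C (i + 1) % 2 + C i / 2

lemma consolidate_step {C : ℕ → ℕ} {k : ℕ} (h : ∀ j < k, C j ≤ 1) :
    ∀ j < k + 1, consolidate C j ≤ 1 := by
  intro j hj
  cases j with
  | zero => exact Nat.le_of_lt_succ (Nat.mod_lt _ (by norm_num))
  | succ i =>
    have hi : C i ≤ 1 := h i (by omega)
    have : C i / 2 = 0 := Nat.div_eq_of_lt (by omega)
    simp only [consolidate, this, Nat.add_zero]
    exact Nat.le_of_lt_succ (Nat.mod_lt _ (by norm_num))

lemma consolidate_iter (C : ℕ → ℕ) (k : ℕ) : ∀ j < k, consolidate^[k] C j ≤ 1 := by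
  induction k with
  | zero => intro j hj; omega
  | succ n ih =>
    rw [Function.iterate_succ_apply']
    exact consolidate_step ih

/-- After `k ≥ 1` rounds of consolidation, every rank group below `k` contains at most
one tree; moreover any configuration with at most one tree per rank is a fixed point of
consolidation. -/
theorem consolidate_iterate_le_one_and_fixed :
    (∀ (C : ℕ → ℕ) (k j : ℕ), 1 ≤ k → j < k → consolidate^[k] C j ≤ 1) ∧
    (∀ C : ℕ → ℕ, (∀ j, C j ≤ 1) → consolidate C = C) := by
  constructor
  · intro C k j _ hj
    exact consolidate_iter C k j hj
  · intro C h
    funext j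
    cases j with
    | zero => exact Nat.mod_eq_of_lt (by have := h 0; omega)
    | succ i =>
      have h1 : C i / 2 = 0 := Nat.div_eq_of_lt (by have := h i; omega)
      have h2 : C (i + 1) % 2 = C (i + 1) := Nat.mod_eq_of_lt (by have := h (i + 1); omega)
      simp [consolidate, h1, h2]
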